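/- Let n ≥ 1 and let μ_n be the product of n copies of the uniform distribution on [0, 2π). Then the expected product of the ℓ∞ condition number and the GEPP max-norm growth factor of a Haar-butterfly matrix equals N^{1+ζ} for ζ = log₂((2/π)(1 + log 2)): ∫ ∏_{j=1}^n (1 + |sin(2θ_j)|)·(1 + min(tan²θ_j, 1/tan²θ_j)) dμ_n(θ) = ((4/π)(1 + ln 2))ⁿ = N^{1 + log₂((2/π)(1 + ln 2))}, where N = 2ⁿ. -/

import Mathlib

open MeasureTheory Real

/-- The uniform probability distribution on `[0, 2π)`: `(2π)⁻¹·λ` restricted to `[0, 2π)`. -/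
noncomputable def unif : Measure ℝ :=
  (ENNReal.ofReal (2 * π))⁻¹ • volume.restrict (Set.Ico 0 (2 * π))

/-- The product `μ_n` of `n` independent copies of the uniform distribution on `[0, 2π)`,
the distribution of the angles of a Haar-butterfly matrix `B(θ) = R(θ_1) ⊗ ⋯ ⊗ R(θ_n)`. -/
noncomputable def μpi (n : ℕ) : Measure (Fin n → ℝ) :=
  Measure.pi fun _ => unif

/- Auxiliary material -/

lemma unif_prob : IsProbabilityMeasure unif := by
  constructor
  rw [unif, Measure.smul_apply, Measure.restrict_apply MeasurableSet.univ, Set.univ_inter,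
    Real.volume_Ico, smul_eq_mul, sub_zero]
  exact ENNReal.inv_mul_cancel (by positivity) ENNReal.ofReal_ne_top

/-- Type synonym of `ℝ` endowed with the uniform measure on `[0,2π)` as its volume. -/
def UnifSpace : Type := ℝ

instance : MeasurableSpace UnifSpace := inferInstanceAs (MeasurableSpace ℝ)
noncomputable instance : MeasureSpace UnifSpace := ⟨unif⟩
instance : IsProbabilityMeasure (volume : Measure UnifSpace) := unif_prob
instance : SigmaFinite (volume : Measure UnifSpace) := inferInstance

/-- The integrand, as a function of a single angle. -/
noncomputable def fInt (θ : ℝ) : ℝ :=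
  (1 + |Real.sin (2 * θ)|) * (1 + min (Real.tan θ ^ 2) (Real.tan θ ^ 2)⁻¹)

lemma min_eq_of_le_one {a : ℝ} (h0 : 0 ≤ a) (h1 : a ≤ 1) : min a a⁻¹ = a := by
  rcases eq_or_lt_of_le h0 with h | h
  · simp [← h]
  · refine min_eq_left ?_
    rw [inv_eq_one_div, le_div_iff₀ h]
    nlinarith

lemma min_eq_of_one_le {a : ℝ} (h1 : 1 ≤ a) : min a a⁻¹ = a⁻¹ := by
  refine min_eq_right ?_
  rw [inv_eq_one_div, div_le_iff₀ (by linarith)]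
  nlinarith

lemma tan_sq_inv (x : ℝ) : (Real.tan x ^ 2)⁻¹ = (Real.cos x / Real.sin x) ^ 2 := by
  rw [Real.tan_eq_sin_div_cos, ← inv_pow, inv_div]

/-- A globally continuous formula for the `min` factor. -/
lemma min_tan_eq (x : ℝ) :
    min (Real.tan x ^ 2) (Real.tan x ^ 2)⁻¹ =
      min (Real.sin x ^ 2) (Real.cos x ^ 2) / max (Real.sin x ^ 2) (Real.cos x ^ 2) := by
  have hpyth := Real.sin_sq_add_cos_sq x
  by_cases hc : Real.cos x = 0
  · have hs : Real.sin x ^ 2 = 1 := by nlinarith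
    simp [Real.tan_eq_sin_div_cos, hc, hs, min_def, max_def]
  by_cases hs : Real.sin x = 0
  · have hc2 : Real.cos x ^ 2 = 1 := by nlinarith
    simp [Real.tan_eq_sin_div_cos, hs, hc2, min_def, max_def]
  have hs2 : (0:ℝ) < Real.sin x ^ 2 := by positivity
  have hc2 : (0:ℝ) < Real.cos x ^ 2 := by positivity
  have htan : Real.tan x ^ 2 = Real.sin x ^ 2 / Real.cos x ^ 2 := by
    rw [Real.tan_eq_sin_div_cos, div_pow]
  have hinv : (Real.tan x ^ 2)⁻¹ = Real.cos x ^ 2 / Real.sin x ^ 2 := by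
    rw [tan_sq_inv, div_pow]
  rcases le_total (Real.sin x ^ 2) (Real.cos x ^ 2) with h | h
  · rw [min_eq_left h, max_eq_right h, hinv, htan]
    refine min_eq_left ?_
    rw [div_le_div_iff₀ hc2 hs2]
    nlinarith
  · rw [min_eq_right h, max_eq_left h, hinv, htan]
    refine min_eq_right ?_
    rw [div_le_div_iff₀ hs2 hc2]
    nlinarith

lemma fInt_continuous : Continuous fInt := by
  have hmax : ∀ x : ℝ, max (Real.sin x ^ 2) (Real.cos x ^ 2) ≠ 0 := by
    intro x h
    have h1 : Real.sin x ^ 2 ≤ 0 := h ▸ le_max_left _ _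
    have h2 : Real.cos x ^ 2 ≤ 0 := h ▸ le_max_right _ _
    nlinarith [Real.sin_sq_add_cos_sq x, sq_nonneg (Real.sin x), sq_nonneg (Real.cos x)]
  have : fInt = fun x => (1 + |Real.sin (2 * x)|) *
      (1 + min (Real.sin x ^ 2) (Real.cos x ^ 2) / max (Real.sin x ^ 2) (Real.cos x ^ 2)) := by
    funext x; rw [fInt, min_tan_eq]
  rw [this]
  apply Continuous.mul
  · exact continuous_const.add (Real.continuous_sin.comp (continuous_const.mul continuous_id)).abs
  · refine continuous_const.add (Continuous.div ?_ ?_ hmax)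
    · exact (Real.continuous_sin.pow 2).min (Real.continuous_cos.pow 2)
    · exact (Real.continuous_sin.pow 2).max (Real.continuous_cos.pow 2)

lemma fInt_periodic : Function.Periodic fInt (π / 2) := by
  intro x
  have h1 : Real.sin (2 * (x + π / 2)) = -Real.sin (2 * x) := by
    have : 2 * (x + π / 2) = 2 * x + π := by ring
    rw [this, Real.sin_add_pi]
  have h2 : Real.tan (x + π / 2) ^ 2 = (Real.tan x ^ 2)⁻¹ := by
    rw [Real.tan_eq_sin_div_cos, Real.sin_add_pi_div_two, Real.cos_add_pi_div_two, tan_sq_inv,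
      div_neg, neg_sq]
  rw [fInt, fInt, h1, abs_neg, h2, inv_inv, min_comm]

lemma integrable_fInt (a b : ℝ) : IntervalIntegrable fInt volume a b :=
  fInt_continuous.intervalIntegrable a b

lemma log_sqrt2_div_two : Real.log (Real.sqrt 2 / 2) = -(Real.log 2 / 2) := by
  rw [Real.log_div (by positivity) two_ne_zero, Real.log_sqrt (by norm_num)]
  ring

lemma cos_pos_aux {x : ℝ} (hx : x ∈ Set.uIcc (0:ℝ) (π/4)) : 0 < Real.cos x := by
  rw [Set.uIcc_of_le (by positivity)] at hx
  exact Real.cos_pos_of_mem_Ioo ⟨by nlinarith [Real.pi_pos, hx.1], by nlinarith [Real.pi_pos, hx.2]⟩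

lemma sin_pos_aux {x : ℝ} (hx : x ∈ Set.uIcc (π/4:ℝ) (π/2)) : 0 < Real.sin x := by
  rw [Set.uIcc_of_le (by nlinarith [Real.pi_pos])] at hx
  exact Real.sin_pos_of_pos_of_lt_pi (by nlinarith [Real.pi_pos, hx.1])
    (by nlinarith [Real.pi_pos, hx.2])

lemma int_first : ∫ x in (0:ℝ)..(π/4), fInt x = 1 + Real.log 2 := by
  have heq : Set.EqOn fInt (fun x => 1 / Real.cos x ^ 2 + 2 * (Real.sin x / Real.cos x))
      (Set.uIcc 0 (π/4)) := by
    intro x hx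
    have hcos : 0 < Real.cos x := cos_pos_aux hx
    rw [Set.uIcc_of_le (by positivity)] at hx
    obtain ⟨hx0, hx1⟩ := hx
    have hpyth := Real.sin_sq_add_cos_sq x
    have hsin : 0 ≤ Real.sin x := Real.sin_nonneg_of_nonneg_of_le_pi hx0
      (by nlinarith [Real.pi_pos])
    have hsc : Real.sin x ≤ Real.cos x := by
      rw [← Real.sin_pi_div_two_sub]
      exact Real.sin_le_sin_of_le_of_le_pi_div_two (by nlinarith [Real.pi_pos])
        (by nlinarith [Real.pi_pos]) (by nlinarith [Real.pi_pos])
    have htan0 : 0 ≤ Real.tan x := by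
      rw [Real.tan_eq_sin_div_cos]; positivity
    have htan1 : Real.tan x ≤ 1 := by
      rw [Real.tan_eq_sin_div_cos, div_le_one hcos]; exact hsc
    have habs : |Real.sin (2 * x)| = Real.sin (2 * x) :=
      abs_of_nonneg (Real.sin_nonneg_of_nonneg_of_le_pi (by linarith)
        (by nlinarith [Real.pi_pos]))
    rw [fInt, habs, min_eq_of_le_one (by positivity) (by nlinarith),
      Real.sin_two_mul, Real.tan_eq_sin_div_cos]
    field_simp
    ring_nf
    linarith [hpyth]
  rw [intervalIntegral.integral_congr heq]
  have key : ∀ x ∈ Set.uIcc (0:ℝ) (π/4),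
      HasDerivAt (fun y => Real.sin y / Real.cos y - 2 * Real.log (Real.cos y))
        (1 / Real.cos x ^ 2 + 2 * (Real.sin x / Real.cos x)) x := by
    intro x hx
    have hcos : 0 < Real.cos x := cos_pos_aux hx
    have hpyth := Real.sin_sq_add_cos_sq x
    have h1 : HasDerivAt (fun y => Real.sin y / Real.cos y)
        ((Real.cos x * Real.cos x - Real.sin x * -Real.sin x) / Real.cos x ^ 2) x :=
      (Real.hasDerivAt_sin x).div (Real.hasDerivAt_cos x) hcos.ne'
    have h2 : HasDerivAt (fun y => Real.log (Real.cos y)) (-Real.sin x / Real.cos x) x :=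
      (Real.hasDerivAt_cos x).log hcos.ne'
    refine (h1.sub (h2.const_mul 2)).congr_deriv ?_
    have := hcos.ne'
    field_simp
    nlinarith [hpyth]
  have hint : IntervalIntegrable (fun x => 1 / Real.cos x ^ 2 + 2 * (Real.sin x / Real.cos x))
      volume 0 (π/4) := by
    apply ContinuousOn.intervalIntegrable
    have hne : ∀ x ∈ Set.uIcc (0:ℝ) (π/4), Real.cos x ≠ 0 := fun x hx => (cos_pos_aux hx).ne'
    exact (continuousOn_const.div (Real.continuous_cos.continuousOn.pow 2)
      fun x hx => pow_ne_zero 2 (hne x hx)).add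
      (continuousOn_const.mul (Real.continuous_sin.continuousOn.div
        Real.continuous_cos.continuousOn hne))
  rw [intervalIntegral.integral_eq_sub_of_hasDerivAt key hint]
  rw [Real.sin_pi_div_four, Real.cos_pi_div_four, Real.sin_zero, Real.cos_zero, Real.log_one,
    div_self (by positivity : (Real.sqrt 2 / 2 : ℝ) ≠ 0), log_sqrt2_div_two]
  ring

lemma int_second : ∫ x in (π/4:ℝ)..(π/2), fInt x = 1 + Real.log 2 := by
  have heq : Set.EqOn fInt (fun x => 1 / Real.sin x ^ 2 + 2 * (Real.cos x / Real.sin x))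
      (Set.uIcc (π/4) (π/2)) := by
    intro x hx
    have hsin : 0 < Real.sin x := sin_pos_aux hx
    rw [Set.uIcc_of_le (by nlinarith [Real.pi_pos])] at hx
    obtain ⟨hx0, hx1⟩ := hx
    have hpyth := Real.sin_sq_add_cos_sq x
    have hcos0 : 0 ≤ Real.cos x :=
      Real.cos_nonneg_of_mem_Icc ⟨by nlinarith [Real.pi_pos], hx1⟩
    have hcs : Real.cos x ≤ Real.sin x := by
      rw [← Real.sin_pi_div_two_sub]
      exact Real.sin_le_sin_of_le_of_le_pi_div_two (by nlinarith [Real.pi_pos])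
        (by nlinarith [Real.pi_pos]) (by nlinarith [Real.pi_pos])
    have hmin : min (Real.tan x ^ 2) (Real.tan x ^ 2)⁻¹ = (Real.cos x / Real.sin x) ^ 2 := by
      rcases eq_or_lt_of_le hcos0 with hc | hc
      · rw [Real.tan_eq_sin_div_cos, ← hc]
        simp
      · have htan1 : 1 ≤ Real.tan x := by
          rw [Real.tan_eq_sin_div_cos, le_div_iff₀ hc]; linarith
        rw [← tan_sq_inv]
        exact min_eq_of_one_le (by nlinarith)
    have habs : |Real.sin (2 * x)| = Real.sin (2 * x) :=
      abs_of_nonneg (Real.sin_nonneg_of_nonneg_of_le_pi (by nlinarith [Real.pi_pos])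
        (by nlinarith [Real.pi_pos]))
    rw [fInt, habs, hmin, Real.sin_two_mul]
    field_simp
    ring_nf
    linarith [hpyth]
  rw [intervalIntegral.integral_congr heq]
  have key : ∀ x ∈ Set.uIcc (π/4:ℝ) (π/2),
      HasDerivAt (fun y => -(Real.cos y / Real.sin y) + 2 * Real.log (Real.sin y))
        (1 / Real.sin x ^ 2 + 2 * (Real.cos x / Real.sin x)) x := by
    intro x hx
    have hsin : 0 < Real.sin x := sin_pos_aux hx
    have hpyth := Real.sin_sq_add_cos_sq x
    have h1 : HasDerivAt (fun y => Real.cos y / Real.sin y)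
        ((-Real.sin x * Real.sin x - Real.cos x * Real.cos x) / Real.sin x ^ 2) x :=
      (Real.hasDerivAt_cos x).div (Real.hasDerivAt_sin x) hsin.ne'
    have h2 : HasDerivAt (fun y => Real.log (Real.sin y)) (Real.cos x / Real.sin x) x :=
      (Real.hasDerivAt_sin x).log hsin.ne'
    refine (h1.neg.add (h2.const_mul 2)).congr_deriv ?_
    have := hsin.ne'
    field_simp
    nlinarith [hpyth]
  have hint : IntervalIntegrable (fun x => 1 / Real.sin x ^ 2 + 2 * (Real.cos x / Real.sin x))
      volume (π/4) (π/2) := by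
    apply ContinuousOn.intervalIntegrable
    have hne : ∀ x ∈ Set.uIcc (π/4:ℝ) (π/2), Real.sin x ≠ 0 := fun x hx => (sin_pos_aux hx).ne'
    exact (continuousOn_const.div (Real.continuous_sin.continuousOn.pow 2)
      fun x hx => pow_ne_zero 2 (hne x hx)).add
      (continuousOn_const.mul (Real.continuous_cos.continuousOn.div
        Real.continuous_sin.continuousOn hne))
  rw [intervalIntegral.integral_eq_sub_of_hasDerivAt key hint]
  rw [Real.sin_pi_div_four, Real.cos_pi_div_four, Real.sin_pi_div_two, Real.cos_pi_div_two,
    Real.log_one, div_self (by positivity : (Real.sqrt 2 / 2 : ℝ) ≠ 0), log_sqrt2_div_two]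
  ring

lemma int_interval : ∫ x in (0:ℝ)..(2*π), fInt x = 8 * (1 + Real.log 2) := by
  have h4 : ∫ x in (0:ℝ)..(0 + (4:ℤ) • (π/2)), fInt x = (4:ℤ) • ∫ x in (0:ℝ)..(0 + π/2), fInt x :=
    fInt_periodic.intervalIntegral_add_zsmul_eq 4 0 integrable_fInt
  have he : (0:ℝ) + (4:ℤ) • (π/2) = 2*π := by rw [zsmul_eq_mul]; push_cast; ring
  rw [he, zero_add, zsmul_eq_mul] at h4
  rw [h4, ← intervalIntegral.integral_add_adjacent_intervals (integrable_fInt 0 (π/4))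
    (integrable_fInt (π/4) (π/2)), int_first, int_second]
  push_cast
  ring

lemma int_unif : ∫ x, fInt x ∂unif = 4 / π * (1 + Real.log 2) := by
  have hpi : (0:ℝ) < 2 * π := by positivity
  rw [unif, integral_smul_measure, ENNReal.toReal_inv, ENNReal.toReal_ofReal hpi.le]
  have : ∫ x, fInt x ∂(volume.restrict (Set.Ico 0 (2*π))) = ∫ x in (0:ℝ)..(2*π), fInt x := by
    rw [intervalIntegral.integral_of_le hpi.le]
    rw [show ∫ x, fInt x ∂(volume.restrict (Set.Ico 0 (2*π))) = ∫ x in Set.Ico 0 (2*π), fInt x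
      from rfl, MeasureTheory.integral_Ico_eq_integral_Ioo,
      ← MeasureTheory.integral_Ioc_eq_integral_Ioo]
  rw [this, int_interval, smul_eq_mul]
  have hπ := Real.pi_ne_zero
  field_simp
  ring

/-- The expected product of the ℓ∞ condition number and the GEPP max-norm growth factor of
an `N×N` Haar-butterfly matrix (`N = 2ⁿ`) is `N^{1+ζ}` for `ζ = log₂((2/π)(1 + ln 2))`:
`∫ ∏_j (1 + |sin(2θ_j)|)(1 + min(tan²θ_j, 1/tan²θ_j)) dμ_n(θ) = ((4/π)(1 + ln 2))ⁿ`. -/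
theorem expected_cond_mul_growth (n : ℕ) (hn : 1 ≤ n) :
    (∫ θ : Fin n → ℝ,
        ∏ j, (1 + |Real.sin (2 * θ j)|) *
          (1 + min (Real.tan (θ j) ^ 2) (Real.tan (θ j) ^ 2)⁻¹) ∂(μpi n)) =
      (4 / π * (1 + Real.log 2)) ^ n ∧
    ((4 / π * (1 + Real.log 2) : ℝ)) ^ n =
      ((2 : ℝ) ^ n) ^ (1 + Real.logb 2 (2 / π * (1 + Real.log 2))) := by
  constructor
  · have key : (∫ θ : Fin n → ℝ, ∏ j, fInt (θ j) ∂(μpi n)) = (∫ x, fInt x ∂unif) ^ n := by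
      haveI := unif_prob
      have := MeasureTheory.integral_fintype_prod_eq_pow (𝕜 := ℝ) (ι := Fin n) fInt (μ := unif)
      simpa [μpi] using this
    rw [show (∫ θ : Fin n → ℝ,
        ∏ j, (1 + |Real.sin (2 * θ j)|) *
          (1 + min (Real.tan (θ j) ^ 2) (Real.tan (θ j) ^ 2)⁻¹) ∂(μpi n)) =
        (∫ θ : Fin n → ℝ, ∏ j, fInt (θ j) ∂(μpi n)) from rfl, key, int_unif]
  · have hc : (0:ℝ) < 2 / π * (1 + Real.log 2) := by
      have := Real.log_pos one_lt_two
      have := Real.pi_pos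
      positivity
    have h2 : (2:ℝ) ^ (1 + Real.logb 2 (2 / π * (1 + Real.log 2))) =
        4 / π * (1 + Real.log 2) := by
      rw [Real.rpow_add two_pos, Real.rpow_one, Real.rpow_logb two_pos (by norm_num) hc]
      ring
    rw [← Real.rpow_natCast (2:ℝ) n, ← Real.rpow_natCast (4 / π * (1 + Real.log 2)) n,
      ← Real.rpow_mul (by norm_num : (0:ℝ) ≤ 2), mul_comm (n:ℝ), Real.rpow_mul
      (by norm_num : (0:ℝ) ≤ 2), h2]
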